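/- Let μ be the bilinear skew-symmetric map on ℝ^7 with nonzero basis brackets [e1,e2]=e3, [e1,e3]=e4, [e1,e4]=e5, [e1,e5]=e6, [e1,e6]=e7, [e2,e3]=e6, [e2,e4]=e7, [e2,e5]=e7, [e3,e4]=-e7. Then μ satisfies the Jacobi identity, the space of derivations of (ℝ^7,μ) has dimension 10, and every derivation of (ℝ^7,μ) is nilpotent (i.e. (ℝ^7,μ) is characteristically nilpotent). -/
import Mathlib


open Finset

noncomputable section

/-- `ℝ⁷` with its standard basis and standard inner product. -/
abbrev V7 : Type := Fin 7 → ℝ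

/-- The standard basis vector `e i`. -/
def e (i : Fin 7) : V7 := Pi.single i 1

/-- The standard inner product on `ℝ⁷`. -/
def dot (x y : V7) : ℝ := ∑ i, x i * y i

/-- Structure constants built from a list of entries `(i, j, k, a)`, each meaning that
`μ (e i) (e j)` has component `a` along `e k` (and `μ (e j) (e i)` has component `-a`);
all unlisted basis brackets are `0`. -/
def toC (L : List (Fin 7 × Fin 7 × Fin 7 × ℝ)) (i j k : Fin 7) : ℝ :=
  (L.map fun t =>
      (if t.1 = i ∧ t.2.1 = j ∧ t.2.2.1 = k then t.2.2.2 else 0)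
    - (if t.1 = j ∧ t.2.1 = i ∧ t.2.2.1 = k then t.2.2.2 else 0)).sum

/-- The bilinear skew-symmetric map on `ℝ⁷` with structure constants `c`. -/
def br (c : Fin 7 → Fin 7 → Fin 7 → ℝ) (x y : V7) : V7 :=
  fun k => ∑ i, ∑ j, x i * y j * c i j k

lemma br_add_left (c : Fin 7 → Fin 7 → Fin 7 → ℝ) (x x' y : V7) :
    br c (x + x') y = br c x y + br c x' y := by
  funext k
  simp only [br, Pi.add_apply, ← Finset.sum_add_distrib]
  exact Finset.sum_congr rfl fun i _ => Finset.sum_congr rfl fun j _ => by ring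

lemma br_smul_left (c : Fin 7 → Fin 7 → Fin 7 → ℝ) (r : ℝ) (x y : V7) :
    br c (r • x) y = r • br c x y := by
  funext k
  simp only [br, Pi.smul_apply, smul_eq_mul, Finset.mul_sum]
  exact Finset.sum_congr rfl fun i _ => Finset.sum_congr rfl fun j _ => by ring

lemma br_add_right (c : Fin 7 → Fin 7 → Fin 7 → ℝ) (x y y' : V7) :
    br c x (y + y') = br c x y + br c x y' := by
  funext k
  simp only [br, Pi.add_apply, ← Finset.sum_add_distrib]
  exact Finset.sum_congr rfl fun i _ => Finset.sum_congr rfl fun j _ => by ring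

lemma br_smul_right (c : Fin 7 → Fin 7 → Fin 7 → ℝ) (r : ℝ) (x y : V7) :
    br c x (r • y) = r • br c x y := by
  funext k
  simp only [br, Pi.smul_apply, smul_eq_mul, Finset.mul_sum]
  exact Finset.sum_congr rfl fun i _ => Finset.sum_congr rfl fun j _ => by ring

lemma br_zero_left (c : Fin 7 → Fin 7 → Fin 7 → ℝ) (y : V7) : br c 0 y = 0 := by
  funext k; simp [br]

lemma br_zero_right (c : Fin 7 → Fin 7 → Fin 7 → ℝ) (x : V7) : br c x 0 = 0 := by
  funext k; simp [br]

/-- The space of derivations of the algebra `(ℝ⁷, br c)`, i.e. the linear maps `D` with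
`D (μ x y) = μ (D x) y + μ x (D y)` for all `x, y`, as a submodule of the endomorphisms. -/
def derivations (c : Fin 7 → Fin 7 → Fin 7 → ℝ) : Submodule ℝ (Module.End ℝ V7) where
  carrier := {D | ∀ x y, D (br c x y) = br c (D x) y + br c x (D y)}
  add_mem' := by
    intro D E hD hE x y
    simp only [LinearMap.add_apply, hD x y, hE x y, br_add_left, br_add_right]
    abel
  zero_mem' := by
    intro x y
    simp [br_zero_left, br_zero_right]
  smul_mem' := by
    intro r D hD x y
    simp only [LinearMap.smul_apply, hD x y, smul_add, br_smul_left, br_smul_right]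

/-- The Jacobi identity for the bracket `br c`. -/
def Jacobi (c : Fin 7 → Fin 7 → Fin 7 → ℝ) : Prop :=
  ∀ x y z : V7, br c (br c x y) z + br c (br c y z) x + br c (br c z x) y = 0

/-- Skew-symmetry of the bracket `br c`. -/
def Skew (c : Fin 7 → Fin 7 → Fin 7 → ℝ) : Prop :=
  ∀ x y : V7, br c x y = - br c y x

/-- The diagonal endomorphism `diag (a 1, …, a 7)` of `ℝ⁷`, `e i ↦ a i • e i`. -/
def diagL (a : Fin 7 → ℝ) : Module.End ℝ V7 :=
  LinearMap.pi fun i => a i • LinearMap.proj i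

/-- Structure constants of the bracket with nonzero basis brackets
`[e1,e2]=e3, [e1,e3]=e4, [e1,e4]=e5, [e1,e5]=e6, [e1,e6]=e7, [e2,e3]=e6, [e2,e4]=e7,
[e2,e5]=e7, [e3,e4]=-e7`. -/
def c0 : Fin 7 → Fin 7 → Fin 7 → ℝ :=
  toC [(0, 1, 2, (1:ℝ)),
   (0, 2, 3, 1),
   (0, 3, 4, 1),
   (0, 4, 5, 1),
   (0, 5, 6, 1),
   (1, 2, 5, 1),
   (1, 3, 6, 1),
   (1, 4, 6, 1),
   (2, 3, 6, -1)]


def B (x y : V7) : V7 := fun k =>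
  if k = 2 then x 0 * y 1 - x 1 * y 0
  else if k = 3 then x 0 * y 2 - x 2 * y 0
  else if k = 4 then x 0 * y 3 - x 3 * y 0
  else if k = 5 then x 0 * y 4 - x 4 * y 0 + x 1 * y 2 - x 2 * y 1
  else if k = 6 then x 0 * y 5 - x 5 * y 0 + x 1 * y 3 - x 3 * y 1 + x 1 * y 4 - x 4 * y 1 - x 2 * y 3 + x 3 * y 2
  else 0

lemma hbr (x y : V7) : br c0 x y = B x y := by
  funext k
  fin_cases k <;> simp [br, c0, toC, Fin.sum_univ_seven, B] <;> ring

lemma skew0 : Skew c0 := by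
  intro x y
  rw [hbr, hbr]
  funext k
  fin_cases k <;> simp [B] <;> ring

lemma jac0 : Jacobi c0 := by
  intro x y z
  rw [hbr, hbr, hbr, hbr, hbr, hbr]
  funext k
  fin_cases k <;> simp [B] <;> ring

lemma e_apply (i j : Fin 7) : e i j = if j = i then 1 else 0 := Pi.single_apply i 1 j

lemma v_eq (v : V7) : v = ∑ k, v k • e k := by
  funext j
  rw [Finset.sum_apply]
  simp [e_apply]

lemma Dapp (D : Module.End ℝ V7) (v : V7) (m : Fin 7) :
    D v m = ∑ k, v k * D (e k) m := by
  conv_lhs => rw [v_eq v]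
  rw [map_sum]
  rw [Finset.sum_apply]
  simp
def gen (a : Fin 10 → ℝ) : Module.End ℝ V7 where
  toFun x := fun m =>
    if m = 1 then (-1:ℝ) * a 3 * x 0 + (1:ℝ) * a 9 * x 0
    else
    if m = 2 then (-5/2:ℝ) * a 3 * x 0 + (-1:ℝ) * a 8 * x 0 + (5/2:ℝ) * a 9 * x 0 + (1:ℝ) * a 3 * x 1
    else
    if m = 3 then (-1:ℝ) * a 2 * x 0 + (1:ℝ) * a 7 * x 0 + (-1/2:ℝ) * a 3 * x 1 + (1/2:ℝ) * a 9 * x 1 + (1:ℝ) * a 3 * x 2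
    else
    if m = 4 then (1:ℝ) * a 1 * x 0 + (1:ℝ) * a 2 * x 0 + (-1:ℝ) * a 6 * x 0 + (-1:ℝ) * a 7 * x 0 + (1:ℝ) * a 2 * x 1 + (-5/2:ℝ) * a 3 * x 1 + (-1:ℝ) * a 8 * x 1 + (5/2:ℝ) * a 9 * x 1 + (-1/2:ℝ) * a 3 * x 2 + (1/2:ℝ) * a 9 * x 2 + (1:ℝ) * a 3 * x 3
    else
    if m = 5 then (1:ℝ) * a 0 * x 0 + (1:ℝ) * a 1 * x 1 + (1:ℝ) * a 2 * x 2 + (-3/2:ℝ) * a 3 * x 3 + (3/2:ℝ) * a 9 * x 3 + (1:ℝ) * a 3 * x 4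
    else
    if m = 6 then (1:ℝ) * a 4 * x 0 + (1:ℝ) * a 5 * x 1 + (1:ℝ) * a 6 * x 2 + (1:ℝ) * a 7 * x 3 + (1:ℝ) * a 8 * x 4 + (1:ℝ) * a 9 * x 5
    else
    0
  map_add' x y := by
    funext m
    fin_cases m <;> simp <;> ring
  map_smul' r x := by
    funext m
    fin_cases m <;> simp <;> ring

lemma gen_mem (a : Fin 10 → ℝ) : gen a ∈ derivations c0 := by
  intro x y
  rw [hbr, hbr, hbr]
  funext m
  fin_cases m <;> simp [gen, B] <;> ring

def phi : Module.End ℝ V7 →ₗ[ℝ] (Fin 10 → ℝ) where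
  toFun D := fun t =>
    if t = 0 then D (e 0) 5
    else if t = 1 then D (e 1) 5
    else if t = 2 then D (e 2) 5
    else if t = 3 then D (e 4) 5
    else if t = 4 then D (e 0) 6
    else if t = 5 then D (e 1) 6
    else if t = 6 then D (e 2) 6
    else if t = 7 then D (e 3) 6
    else if t = 8 then D (e 4) 6
    else D (e 5) 6
  map_add' D E := by funext t; fin_cases t <;> simp
  map_smul' r D := by funext t; fin_cases t <;> simp

lemma end_ext {D E : Module.End ℝ V7} (h : ∀ k, D (e k) = E (e k)) : D = E := by
  apply LinearMap.ext
  intro x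
  funext m
  rw [Dapp, Dapp]
  exact Finset.sum_congr rfl fun k _ => by rw [h k]
set_option maxHeartbeats 4000000 in
lemma complete (D : Module.End ℝ V7) (hD : D ∈ derivations c0) (a : Fin 10 → ℝ)
    (h0 : a 0 = D (e 0) 5) (h1 : a 1 = D (e 1) 5) (h2 : a 2 = D (e 2) 5) (h3 : a 3 = D (e 4) 5) (h4 : a 4 = D (e 0) 6) (h5 : a 5 = D (e 1) 6) (h6 : a 6 = D (e 2) 6) (h7 : a 7 = D (e 3) 6) (h8 : a 8 = D (e 4) 6) (h9 : a 9 = D (e 5) 6) : gen a = D := by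
  have hb : ∀ x y, D (B x y) = B (D x) y + B x (D y) := by
    intro x y; rw [← hbr, ← hbr, ← hbr]; exact hD x y
  have E0 := congrFun (hb (e 0) (e 1)) 0
  rw [Dapp] at E0
  simp only [Pi.add_apply] at E0
  simp [B, e_apply, Fin.sum_univ_seven] at E0
  have E2 := congrFun (hb (e 0) (e 1)) 2
  rw [Dapp] at E2
  simp only [Pi.add_apply] at E2
  simp [B, e_apply, Fin.sum_univ_seven] at E2
  have E3 := congrFun (hb (e 0) (e 1)) 3
  rw [Dapp] at E3
  simp only [Pi.add_apply] at E3
  simp [B, e_apply, Fin.sum_univ_seven] at E3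
  have E4 := congrFun (hb (e 0) (e 1)) 4
  rw [Dapp] at E4
  simp only [Pi.add_apply] at E4
  simp [B, e_apply, Fin.sum_univ_seven] at E4
  have E5 := congrFun (hb (e 0) (e 1)) 5
  rw [Dapp] at E5
  simp only [Pi.add_apply] at E5
  simp [B, e_apply, Fin.sum_univ_seven] at E5
  have E6 := congrFun (hb (e 0) (e 1)) 6
  rw [Dapp] at E6
  simp only [Pi.add_apply] at E6
  simp [B, e_apply, Fin.sum_univ_seven] at E6
  have E7 := congrFun (hb (e 0) (e 2)) 0
  rw [Dapp] at E7
  simp only [Pi.add_apply] at E7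
  simp [B, e_apply, Fin.sum_univ_seven] at E7
  have E8 := congrFun (hb (e 0) (e 2)) 1
  rw [Dapp] at E8
  simp only [Pi.add_apply] at E8
  simp [B, e_apply, Fin.sum_univ_seven] at E8
  have E9 := congrFun (hb (e 0) (e 2)) 2
  rw [Dapp] at E9
  simp only [Pi.add_apply] at E9
  simp [B, e_apply, Fin.sum_univ_seven] at E9
  have E10 := congrFun (hb (e 0) (e 2)) 3
  rw [Dapp] at E10
  simp only [Pi.add_apply] at E10
  simp [B, e_apply, Fin.sum_univ_seven] at E10
  have E11 := congrFun (hb (e 0) (e 2)) 4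
  rw [Dapp] at E11
  simp only [Pi.add_apply] at E11
  simp [B, e_apply, Fin.sum_univ_seven] at E11
  have E12 := congrFun (hb (e 0) (e 2)) 5
  rw [Dapp] at E12
  simp only [Pi.add_apply] at E12
  simp [B, e_apply, Fin.sum_univ_seven] at E12
  have E13 := congrFun (hb (e 0) (e 2)) 6
  rw [Dapp] at E13
  simp only [Pi.add_apply] at E13
  simp [B, e_apply, Fin.sum_univ_seven] at E13
  have E14 := congrFun (hb (e 0) (e 3)) 0
  rw [Dapp] at E14
  simp only [Pi.add_apply] at E14
  simp [B, e_apply, Fin.sum_univ_seven] at E14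
  have E15 := congrFun (hb (e 0) (e 3)) 1
  rw [Dapp] at E15
  simp only [Pi.add_apply] at E15
  simp [B, e_apply, Fin.sum_univ_seven] at E15
  have E16 := congrFun (hb (e 0) (e 3)) 2
  rw [Dapp] at E16
  simp only [Pi.add_apply] at E16
  simp [B, e_apply, Fin.sum_univ_seven] at E16
  have E17 := congrFun (hb (e 0) (e 3)) 3
  rw [Dapp] at E17
  simp only [Pi.add_apply] at E17
  simp [B, e_apply, Fin.sum_univ_seven] at E17
  have E18 := congrFun (hb (e 0) (e 3)) 4
  rw [Dapp] at E18
  simp only [Pi.add_apply] at E18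
  simp [B, e_apply, Fin.sum_univ_seven] at E18
  have E19 := congrFun (hb (e 0) (e 3)) 5
  rw [Dapp] at E19
  simp only [Pi.add_apply] at E19
  simp [B, e_apply, Fin.sum_univ_seven] at E19
  have E20 := congrFun (hb (e 0) (e 3)) 6
  rw [Dapp] at E20
  simp only [Pi.add_apply] at E20
  simp [B, e_apply, Fin.sum_univ_seven] at E20
  have E21 := congrFun (hb (e 0) (e 4)) 0
  rw [Dapp] at E21
  simp only [Pi.add_apply] at E21
  simp [B, e_apply, Fin.sum_univ_seven] at E21
  have E22 := congrFun (hb (e 0) (e 4)) 1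
  rw [Dapp] at E22
  simp only [Pi.add_apply] at E22
  simp [B, e_apply, Fin.sum_univ_seven] at E22
  have E23 := congrFun (hb (e 0) (e 4)) 2
  rw [Dapp] at E23
  simp only [Pi.add_apply] at E23
  simp [B, e_apply, Fin.sum_univ_seven] at E23
  have E24 := congrFun (hb (e 0) (e 4)) 3
  rw [Dapp] at E24
  simp only [Pi.add_apply] at E24
  simp [B, e_apply, Fin.sum_univ_seven] at E24
  have E25 := congrFun (hb (e 0) (e 4)) 4
  rw [Dapp] at E25
  simp only [Pi.add_apply] at E25
  simp [B, e_apply, Fin.sum_univ_seven] at E25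
  have E26 := congrFun (hb (e 0) (e 4)) 5
  rw [Dapp] at E26
  simp only [Pi.add_apply] at E26
  simp [B, e_apply, Fin.sum_univ_seven] at E26
  have E27 := congrFun (hb (e 0) (e 4)) 6
  rw [Dapp] at E27
  simp only [Pi.add_apply] at E27
  simp [B, e_apply, Fin.sum_univ_seven] at E27
  have E28 := congrFun (hb (e 0) (e 5)) 0
  rw [Dapp] at E28
  simp only [Pi.add_apply] at E28
  simp [B, e_apply, Fin.sum_univ_seven] at E28
  have E29 := congrFun (hb (e 0) (e 5)) 1
  rw [Dapp] at E29
  simp only [Pi.add_apply] at E29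
  simp [B, e_apply, Fin.sum_univ_seven] at E29
  have E30 := congrFun (hb (e 0) (e 5)) 2
  rw [Dapp] at E30
  simp only [Pi.add_apply] at E30
  simp [B, e_apply, Fin.sum_univ_seven] at E30
  have E31 := congrFun (hb (e 0) (e 5)) 3
  rw [Dapp] at E31
  simp only [Pi.add_apply] at E31
  simp [B, e_apply, Fin.sum_univ_seven] at E31
  have E32 := congrFun (hb (e 0) (e 5)) 4
  rw [Dapp] at E32
  simp only [Pi.add_apply] at E32
  simp [B, e_apply, Fin.sum_univ_seven] at E32
  have E33 := congrFun (hb (e 0) (e 5)) 5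
  rw [Dapp] at E33
  simp only [Pi.add_apply] at E33
  simp [B, e_apply, Fin.sum_univ_seven] at E33
  have E34 := congrFun (hb (e 0) (e 5)) 6
  rw [Dapp] at E34
  simp only [Pi.add_apply] at E34
  simp [B, e_apply, Fin.sum_univ_seven] at E34
  have E39 := congrFun (hb (e 0) (e 6)) 6
  rw [Dapp] at E39
  simp only [Pi.add_apply] at E39
  simp [B, e_apply, Fin.sum_univ_seven] at E39
  have E43 := congrFun (hb (e 1) (e 2)) 3
  rw [Dapp] at E43
  simp only [Pi.add_apply] at E43
  simp [B, e_apply, Fin.sum_univ_seven] at E43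
  have E45 := congrFun (hb (e 1) (e 2)) 5
  rw [Dapp] at E45
  simp only [Pi.add_apply] at E45
  simp [B, e_apply, Fin.sum_univ_seven] at E45
  have E46 := congrFun (hb (e 1) (e 2)) 6
  rw [Dapp] at E46
  simp only [Pi.add_apply] at E46
  simp [B, e_apply, Fin.sum_univ_seven] at E46
  have E60 := congrFun (hb (e 1) (e 4)) 6
  rw [Dapp] at E60
  simp only [Pi.add_apply] at E60
  simp [B, e_apply, Fin.sum_univ_seven] at E60

  have g0_0 : gen a (e 0) 0 = D (e 0) 0 := by
    simp only [gen, LinearMap.coe_mk, AddHom.coe_mk]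
    simp [e_apply]
    linear_combination (1:ℝ) * E10 + (1:ℝ) * E18 + (-1:ℝ) * E25 + (-1:ℝ) * E33 + (-1:ℝ) * E34 + (-1:ℝ) * E39 + (-1:ℝ) * E45 + (1:ℝ) * E60
  have g0_1 : gen a (e 0) 1 = D (e 0) 1 := by
    simp only [gen, LinearMap.coe_mk, AddHom.coe_mk]
    simp [e_apply]
    linear_combination (-1:ℝ) * h3 + (1:ℝ) * h9 + (1:ℝ) * E27
  have g0_2 : gen a (e 0) 2 = D (e 0) 2 := by
    simp only [gen, LinearMap.coe_mk, AddHom.coe_mk]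
    simp [e_apply]
    linear_combination (-5/2:ℝ) * h3 + (-1:ℝ) * h8 + (5/2:ℝ) * h9 + (-1/2:ℝ) * E4 + (-1/2:ℝ) * E11 + (-1:ℝ) * E12 + (-1/2:ℝ) * E19 + (-1:ℝ) * E20 + (2:ℝ) * E27 + (1/2:ℝ) * E46
  have g0_3 : gen a (e 0) 3 = D (e 0) 3 := by
    simp only [gen, LinearMap.coe_mk, AddHom.coe_mk]
    simp [e_apply]
    linear_combination (-1:ℝ) * h2 + (1:ℝ) * h7 + (1:ℝ) * E13
  have g0_4 : gen a (e 0) 4 = D (e 0) 4 := by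
    simp only [gen, LinearMap.coe_mk, AddHom.coe_mk]
    simp [e_apply]
    linear_combination (1:ℝ) * h1 + (1:ℝ) * h2 + (-1:ℝ) * h6 + (-1:ℝ) * h7 + (-1:ℝ) * E6 + (-1:ℝ) * E13
  have g0_5 : gen a (e 0) 5 = D (e 0) 5 := by
    simp only [gen, LinearMap.coe_mk, AddHom.coe_mk]
    simp [e_apply]
    linear_combination (1:ℝ) * h0
  have g0_6 : gen a (e 0) 6 = D (e 0) 6 := by
    simp only [gen, LinearMap.coe_mk, AddHom.coe_mk]
    simp [e_apply]
    linear_combination (1:ℝ) * h4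
  have g1_0 : gen a (e 1) 0 = D (e 1) 0 := by
    simp only [gen, LinearMap.coe_mk, AddHom.coe_mk]
    simp [e_apply]
    linear_combination (-1:ℝ) * E8 + (-1:ℝ) * E16 + (-1:ℝ) * E24 + (1:ℝ) * E43
  have g1_1 : gen a (e 1) 1 = D (e 1) 1 := by
    simp only [gen, LinearMap.coe_mk, AddHom.coe_mk]
    simp [e_apply]
    linear_combination (2:ℝ) * E10 + (2:ℝ) * E18 + (-3:ℝ) * E25 + (-1:ℝ) * E26 + (-3:ℝ) * E33 + (-3:ℝ) * E34 + (-3:ℝ) * E39 + (-2:ℝ) * E45 + (3:ℝ) * E60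
  have g1_2 : gen a (e 1) 2 = D (e 1) 2 := by
    simp only [gen, LinearMap.coe_mk, AddHom.coe_mk]
    simp [e_apply]
    linear_combination (1:ℝ) * h3 + (1:ℝ) * E3 + (1:ℝ) * E11 + (1:ℝ) * E19
  have g1_3 : gen a (e 1) 3 = D (e 1) 3 := by
    simp only [gen, LinearMap.coe_mk, AddHom.coe_mk]
    simp [e_apply]
    linear_combination (-1/2:ℝ) * h3 + (1/2:ℝ) * h9 + (1/2:ℝ) * E4 + (-1/2:ℝ) * E11 + (-1/2:ℝ) * E19 + (1/2:ℝ) * E46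
  have g1_4 : gen a (e 1) 4 = D (e 1) 4 := by
    simp only [gen, LinearMap.coe_mk, AddHom.coe_mk]
    simp [e_apply]
    linear_combination (1:ℝ) * h2 + (-5/2:ℝ) * h3 + (-1:ℝ) * h8 + (5/2:ℝ) * h9 + (-1/2:ℝ) * E4 + (1:ℝ) * E5 + (-1/2:ℝ) * E11 + (-1:ℝ) * E12 + (-1/2:ℝ) * E19 + (-1:ℝ) * E20 + (2:ℝ) * E27 + (1/2:ℝ) * E46
  have g1_5 : gen a (e 1) 5 = D (e 1) 5 := by
    simp only [gen, LinearMap.coe_mk, AddHom.coe_mk]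
    simp [e_apply]
    linear_combination (1:ℝ) * h1
  have g1_6 : gen a (e 1) 6 = D (e 1) 6 := by
    simp only [gen, LinearMap.coe_mk, AddHom.coe_mk]
    simp [e_apply]
    linear_combination (1:ℝ) * h5
  have g2_0 : gen a (e 2) 0 = D (e 2) 0 := by
    simp only [gen, LinearMap.coe_mk, AddHom.coe_mk]
    simp [e_apply]
    linear_combination (-1:ℝ) * E0
  have g2_1 : gen a (e 2) 1 = D (e 2) 1 := by
    simp only [gen, LinearMap.coe_mk, AddHom.coe_mk]
    simp [e_apply]
    linear_combination (1:ℝ) * E9 + (1:ℝ) * E17 + (1:ℝ) * E25 + (1:ℝ) * E33 + (1:ℝ) * E39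
  have g2_2 : gen a (e 2) 2 = D (e 2) 2 := by
    simp only [gen, LinearMap.coe_mk, AddHom.coe_mk]
    simp [e_apply]
    linear_combination (-1:ℝ) * E2 + (3:ℝ) * E10 + (3:ℝ) * E18 + (-4:ℝ) * E25 + (-1:ℝ) * E26 + (-4:ℝ) * E33 + (-4:ℝ) * E34 + (-4:ℝ) * E39 + (-3:ℝ) * E45 + (4:ℝ) * E60
  have g2_3 : gen a (e 2) 3 = D (e 2) 3 := by
    simp only [gen, LinearMap.coe_mk, AddHom.coe_mk]
    simp [e_apply]
    linear_combination (1:ℝ) * h3 + (1:ℝ) * E11 + (1:ℝ) * E19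
  have g2_4 : gen a (e 2) 4 = D (e 2) 4 := by
    simp only [gen, LinearMap.coe_mk, AddHom.coe_mk]
    simp [e_apply]
    linear_combination (-1/2:ℝ) * h3 + (1/2:ℝ) * h9 + (-1/2:ℝ) * E4 + (-1/2:ℝ) * E11 + (-1/2:ℝ) * E19 + (1/2:ℝ) * E46
  have g2_5 : gen a (e 2) 5 = D (e 2) 5 := by
    simp only [gen, LinearMap.coe_mk, AddHom.coe_mk]
    simp [e_apply]
    linear_combination (1:ℝ) * h2
  have g2_6 : gen a (e 2) 6 = D (e 2) 6 := by
    simp only [gen, LinearMap.coe_mk, AddHom.coe_mk]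
    simp [e_apply]
    linear_combination (1:ℝ) * h6
  have g3_0 : gen a (e 3) 0 = D (e 3) 0 := by
    simp only [gen, LinearMap.coe_mk, AddHom.coe_mk]
    simp [e_apply]
    linear_combination (-1:ℝ) * E7
  have g3_1 : gen a (e 3) 1 = D (e 3) 1 := by
    simp only [gen, LinearMap.coe_mk, AddHom.coe_mk]
    simp [e_apply]
    linear_combination (-1:ℝ) * E8
  have g3_2 : gen a (e 3) 2 = D (e 3) 2 := by
    simp only [gen, LinearMap.coe_mk, AddHom.coe_mk]
    simp [e_apply]
    linear_combination (1:ℝ) * E17 + (1:ℝ) * E25 + (1:ℝ) * E33 + (1:ℝ) * E39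
  have g3_3 : gen a (e 3) 3 = D (e 3) 3 := by
    simp only [gen, LinearMap.coe_mk, AddHom.coe_mk]
    simp [e_apply]
    linear_combination (-1:ℝ) * E2 + (3:ℝ) * E10 + (4:ℝ) * E18 + (-5:ℝ) * E25 + (-1:ℝ) * E26 + (-5:ℝ) * E33 + (-5:ℝ) * E34 + (-5:ℝ) * E39 + (-4:ℝ) * E45 + (5:ℝ) * E60
  have g3_4 : gen a (e 3) 4 = D (e 3) 4 := by
    simp only [gen, LinearMap.coe_mk, AddHom.coe_mk]
    simp [e_apply]
    linear_combination (1:ℝ) * h3 + (1:ℝ) * E19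
  have g3_5 : gen a (e 3) 5 = D (e 3) 5 := by
    simp only [gen, LinearMap.coe_mk, AddHom.coe_mk]
    simp [e_apply]
    linear_combination (-3/2:ℝ) * h3 + (3/2:ℝ) * h9 + (-1/2:ℝ) * E4 + (-1/2:ℝ) * E11 + (-1:ℝ) * E12 + (-1/2:ℝ) * E19 + (1:ℝ) * E27 + (1/2:ℝ) * E46
  have g3_6 : gen a (e 3) 6 = D (e 3) 6 := by
    simp only [gen, LinearMap.coe_mk, AddHom.coe_mk]
    simp [e_apply]
    linear_combination (1:ℝ) * h7
  have g4_0 : gen a (e 4) 0 = D (e 4) 0 := by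
    simp only [gen, LinearMap.coe_mk, AddHom.coe_mk]
    simp [e_apply]
    linear_combination (-1:ℝ) * E14
  have g4_1 : gen a (e 4) 1 = D (e 4) 1 := by
    simp only [gen, LinearMap.coe_mk, AddHom.coe_mk]
    simp [e_apply]
    linear_combination (-1:ℝ) * E15
  have g4_2 : gen a (e 4) 2 = D (e 4) 2 := by
    simp only [gen, LinearMap.coe_mk, AddHom.coe_mk]
    simp [e_apply]
    linear_combination (-1:ℝ) * E8 + (-1:ℝ) * E16
  have g4_3 : gen a (e 4) 3 = D (e 4) 3 := by
    simp only [gen, LinearMap.coe_mk, AddHom.coe_mk]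
    simp [e_apply]
    linear_combination (1:ℝ) * E25 + (1:ℝ) * E33 + (1:ℝ) * E39
  have g4_4 : gen a (e 4) 4 = D (e 4) 4 := by
    simp only [gen, LinearMap.coe_mk, AddHom.coe_mk]
    simp [e_apply]
    linear_combination (-1:ℝ) * E2 + (4:ℝ) * E10 + (4:ℝ) * E18 + (-6:ℝ) * E25 + (-1:ℝ) * E26 + (-6:ℝ) * E33 + (-6:ℝ) * E34 + (-6:ℝ) * E39 + (-5:ℝ) * E45 + (6:ℝ) * E60
  have g4_5 : gen a (e 4) 5 = D (e 4) 5 := by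
    simp only [gen, LinearMap.coe_mk, AddHom.coe_mk]
    simp [e_apply]
    linear_combination (1:ℝ) * h3
  have g4_6 : gen a (e 4) 6 = D (e 4) 6 := by
    simp only [gen, LinearMap.coe_mk, AddHom.coe_mk]
    simp [e_apply]
    linear_combination (1:ℝ) * h8
  have g5_0 : gen a (e 5) 0 = D (e 5) 0 := by
    simp only [gen, LinearMap.coe_mk, AddHom.coe_mk]
    simp [e_apply]
    linear_combination (-1:ℝ) * E21
  have g5_1 : gen a (e 5) 1 = D (e 5) 1 := by
    simp only [gen, LinearMap.coe_mk, AddHom.coe_mk]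
    simp [e_apply]
    linear_combination (-1:ℝ) * E22
  have g5_2 : gen a (e 5) 2 = D (e 5) 2 := by
    simp only [gen, LinearMap.coe_mk, AddHom.coe_mk]
    simp [e_apply]
    linear_combination (-1:ℝ) * E15 + (-1:ℝ) * E23
  have g5_3 : gen a (e 5) 3 = D (e 5) 3 := by
    simp only [gen, LinearMap.coe_mk, AddHom.coe_mk]
    simp [e_apply]
    linear_combination (-1:ℝ) * E8 + (-1:ℝ) * E16 + (-1:ℝ) * E24
  have g5_4 : gen a (e 5) 4 = D (e 5) 4 := by
    simp only [gen, LinearMap.coe_mk, AddHom.coe_mk]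
    simp [e_apply]
    linear_combination (1:ℝ) * E33 + (1:ℝ) * E39
  have g5_5 : gen a (e 5) 5 = D (e 5) 5 := by
    simp only [gen, LinearMap.coe_mk, AddHom.coe_mk]
    simp [e_apply]
    linear_combination (-1:ℝ) * E2 + (5:ℝ) * E10 + (5:ℝ) * E18 + (-7:ℝ) * E25 + (-2:ℝ) * E26 + (-7:ℝ) * E33 + (-7:ℝ) * E34 + (-7:ℝ) * E39 + (-6:ℝ) * E45 + (7:ℝ) * E60
  have g5_6 : gen a (e 5) 6 = D (e 5) 6 := by
    simp only [gen, LinearMap.coe_mk, AddHom.coe_mk]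
    simp [e_apply]
    linear_combination (1:ℝ) * h9
  have g6_0 : gen a (e 6) 0 = D (e 6) 0 := by
    simp only [gen, LinearMap.coe_mk, AddHom.coe_mk]
    simp [e_apply]
    linear_combination (-1:ℝ) * E28
  have g6_1 : gen a (e 6) 1 = D (e 6) 1 := by
    simp only [gen, LinearMap.coe_mk, AddHom.coe_mk]
    simp [e_apply]
    linear_combination (-1:ℝ) * E29
  have g6_2 : gen a (e 6) 2 = D (e 6) 2 := by
    simp only [gen, LinearMap.coe_mk, AddHom.coe_mk]
    simp [e_apply]
    linear_combination (-1:ℝ) * E22 + (-1:ℝ) * E30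
  have g6_3 : gen a (e 6) 3 = D (e 6) 3 := by
    simp only [gen, LinearMap.coe_mk, AddHom.coe_mk]
    simp [e_apply]
    linear_combination (-1:ℝ) * E15 + (-1:ℝ) * E23 + (-1:ℝ) * E31
  have g6_4 : gen a (e 6) 4 = D (e 6) 4 := by
    simp only [gen, LinearMap.coe_mk, AddHom.coe_mk]
    simp [e_apply]
    linear_combination (-1:ℝ) * E8 + (-1:ℝ) * E16 + (-1:ℝ) * E24 + (-1:ℝ) * E32
  have g6_5 : gen a (e 6) 5 = D (e 6) 5 := by
    simp only [gen, LinearMap.coe_mk, AddHom.coe_mk]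
    simp [e_apply]
    linear_combination (1:ℝ) * E39
  have g6_6 : gen a (e 6) 6 = D (e 6) 6 := by
    simp only [gen, LinearMap.coe_mk, AddHom.coe_mk]
    simp [e_apply]
    linear_combination (-1:ℝ) * E2 + (6:ℝ) * E10 + (6:ℝ) * E18 + (-8:ℝ) * E25 + (-2:ℝ) * E26 + (-8:ℝ) * E33 + (-9:ℝ) * E34 + (-8:ℝ) * E39 + (-7:ℝ) * E45 + (8:ℝ) * E60
  apply end_ext
  intro k
  funext m
  fin_cases k <;> fin_cases m
  exacts [g0_0, g0_1, g0_2, g0_3, g0_4, g0_5, g0_6, g1_0, g1_1, g1_2, g1_3, g1_4, g1_5, g1_6, g2_0, g2_1, g2_2, g2_3, g2_4, g2_5, g2_6, g3_0, g3_1, g3_2, g3_3, g3_4, g3_5, g3_6, g4_0, g4_1, g4_2, g4_3, g4_4, g4_5, g4_6, g5_0, g5_1, g5_2, g5_3, g5_4, g5_5, g5_6, g6_0, g6_1, g6_2, g6_3, g6_4, g6_5, g6_6]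

lemma gen_comp0 (a : Fin 10 → ℝ) (y : V7) : gen a y 0 = 0 := by simp [gen]

lemma gen_comp1 (a : Fin 10 → ℝ) (y : V7) (h0 : y 0 = 0) : gen a y 1 = 0 := by simp [gen, h0]

lemma gen_comp2 (a : Fin 10 → ℝ) (y : V7) (h0 : y 0 = 0) (h1 : y 1 = 0) : gen a y 2 = 0 := by simp [gen, h0, h1]

lemma gen_comp3 (a : Fin 10 → ℝ) (y : V7) (h0 : y 0 = 0) (h1 : y 1 = 0) (h2 : y 2 = 0) : gen a y 3 = 0 := by simp [gen, h0, h1, h2]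

lemma gen_comp4 (a : Fin 10 → ℝ) (y : V7) (h0 : y 0 = 0) (h1 : y 1 = 0) (h2 : y 2 = 0) (h3 : y 3 = 0) : gen a y 4 = 0 := by simp [gen, h0, h1, h2, h3]

lemma gen_comp5 (a : Fin 10 → ℝ) (y : V7) (h0 : y 0 = 0) (h1 : y 1 = 0) (h2 : y 2 = 0) (h3 : y 3 = 0) (h4 : y 4 = 0) : gen a y 5 = 0 := by simp [gen, h0, h1, h2, h3, h4]

lemma gen_comp6 (a : Fin 10 → ℝ) (y : V7) (h0 : y 0 = 0) (h1 : y 1 = 0) (h2 : y 2 = 0) (h3 : y 3 = 0) (h4 : y 4 = 0) (h5 : y 5 = 0) : gen a y 6 = 0 := by simp [gen, h0, h1, h2, h3, h4, h5]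

lemma gen_pow7 (a : Fin 10 → ℝ) : (gen a)^7 = 0 := by
  apply LinearMap.ext
  intro x
  have e7 : ((gen a)^7) x = (gen a (gen a (gen a (gen a (gen a (gen a (gen a x))))))) := by
    simp [pow_succ, Module.End.mul_apply]
  have c1_0 : (gen a x) 0 = 0 := gen_comp0 a x
  have c2_0 : (gen a (gen a x)) 0 = 0 := gen_comp0 a (gen a x)
  have c2_1 : (gen a (gen a x)) 1 = 0 := gen_comp1 a (gen a x) c1_0
  have c3_0 : (gen a (gen a (gen a x))) 0 = 0 := gen_comp0 a (gen a (gen a x))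
  have c3_1 : (gen a (gen a (gen a x))) 1 = 0 := gen_comp1 a (gen a (gen a x)) c2_0
  have c3_2 : (gen a (gen a (gen a x))) 2 = 0 := gen_comp2 a (gen a (gen a x)) c2_0 c2_1
  have c4_0 : (gen a (gen a (gen a (gen a x)))) 0 = 0 := gen_comp0 a (gen a (gen a (gen a x)))
  have c4_1 : (gen a (gen a (gen a (gen a x)))) 1 = 0 := gen_comp1 a (gen a (gen a (gen a x))) c3_0
  have c4_2 : (gen a (gen a (gen a (gen a x)))) 2 = 0 := gen_comp2 a (gen a (gen a (gen a x))) c3_0 c3_1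
  have c4_3 : (gen a (gen a (gen a (gen a x)))) 3 = 0 := gen_comp3 a (gen a (gen a (gen a x))) c3_0 c3_1 c3_2
  have c5_0 : (gen a (gen a (gen a (gen a (gen a x))))) 0 = 0 := gen_comp0 a (gen a (gen a (gen a (gen a x))))
  have c5_1 : (gen a (gen a (gen a (gen a (gen a x))))) 1 = 0 := gen_comp1 a (gen a (gen a (gen a (gen a x)))) c4_0
  have c5_2 : (gen a (gen a (gen a (gen a (gen a x))))) 2 = 0 := gen_comp2 a (gen a (gen a (gen a (gen a x)))) c4_0 c4_1
  have c5_3 : (gen a (gen a (gen a (gen a (gen a x))))) 3 = 0 := gen_comp3 a (gen a (gen a (gen a (gen a x)))) c4_0 c4_1 c4_2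
  have c5_4 : (gen a (gen a (gen a (gen a (gen a x))))) 4 = 0 := gen_comp4 a (gen a (gen a (gen a (gen a x)))) c4_0 c4_1 c4_2 c4_3
  have c6_0 : (gen a (gen a (gen a (gen a (gen a (gen a x)))))) 0 = 0 := gen_comp0 a (gen a (gen a (gen a (gen a (gen a x)))))
  have c6_1 : (gen a (gen a (gen a (gen a (gen a (gen a x)))))) 1 = 0 := gen_comp1 a (gen a (gen a (gen a (gen a (gen a x))))) c5_0
  have c6_2 : (gen a (gen a (gen a (gen a (gen a (gen a x)))))) 2 = 0 := gen_comp2 a (gen a (gen a (gen a (gen a (gen a x))))) c5_0 c5_1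
  have c6_3 : (gen a (gen a (gen a (gen a (gen a (gen a x)))))) 3 = 0 := gen_comp3 a (gen a (gen a (gen a (gen a (gen a x))))) c5_0 c5_1 c5_2
  have c6_4 : (gen a (gen a (gen a (gen a (gen a (gen a x)))))) 4 = 0 := gen_comp4 a (gen a (gen a (gen a (gen a (gen a x))))) c5_0 c5_1 c5_2 c5_3
  have c6_5 : (gen a (gen a (gen a (gen a (gen a (gen a x)))))) 5 = 0 := gen_comp5 a (gen a (gen a (gen a (gen a (gen a x))))) c5_0 c5_1 c5_2 c5_3 c5_4
  have c7_0 : (gen a (gen a (gen a (gen a (gen a (gen a (gen a x))))))) 0 = 0 := gen_comp0 a (gen a (gen a (gen a (gen a (gen a (gen a x))))))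
  have c7_1 : (gen a (gen a (gen a (gen a (gen a (gen a (gen a x))))))) 1 = 0 := gen_comp1 a (gen a (gen a (gen a (gen a (gen a (gen a x)))))) c6_0
  have c7_2 : (gen a (gen a (gen a (gen a (gen a (gen a (gen a x))))))) 2 = 0 := gen_comp2 a (gen a (gen a (gen a (gen a (gen a (gen a x)))))) c6_0 c6_1
  have c7_3 : (gen a (gen a (gen a (gen a (gen a (gen a (gen a x))))))) 3 = 0 := gen_comp3 a (gen a (gen a (gen a (gen a (gen a (gen a x)))))) c6_0 c6_1 c6_2
  have c7_4 : (gen a (gen a (gen a (gen a (gen a (gen a (gen a x))))))) 4 = 0 := gen_comp4 a (gen a (gen a (gen a (gen a (gen a (gen a x)))))) c6_0 c6_1 c6_2 c6_3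
  have c7_5 : (gen a (gen a (gen a (gen a (gen a (gen a (gen a x))))))) 5 = 0 := gen_comp5 a (gen a (gen a (gen a (gen a (gen a (gen a x)))))) c6_0 c6_1 c6_2 c6_3 c6_4
  have c7_6 : (gen a (gen a (gen a (gen a (gen a (gen a (gen a x))))))) 6 = 0 := gen_comp6 a (gen a (gen a (gen a (gen a (gen a (gen a x)))))) c6_0 c6_1 c6_2 c6_3 c6_4 c6_5
  rw [e7]
  funext m
  fin_cases m
  exacts [c7_0, c7_1, c7_2, c7_3, c7_4, c7_5, c7_6]

set_option maxHeartbeats 1000000 in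
def psi : (Fin 10 → ℝ) →ₗ[ℝ] Module.End ℝ V7 where
  toFun := gen
  map_add' a b := by
    apply LinearMap.ext
    intro x
    funext m
    fin_cases m <;> simp [gen] <;> ring
  map_smul' r a := by
    apply LinearMap.ext
    intro x
    funext m
    fin_cases m <;> simp [gen] <;> ring

set_option maxHeartbeats 1000000 in
lemma phi_gen (a : Fin 10 → ℝ) : phi (gen a) = a := by
  funext t
  fin_cases t <;>
    simp only [phi, gen, LinearMap.coe_mk, AddHom.coe_mk] <;> simp [e_apply] <;> ring

def psi' : (Fin 10 → ℝ) →ₗ[ℝ] ↥(derivations c0) :=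
  LinearMap.codRestrict (derivations c0) psi gen_mem

def phi' : ↥(derivations c0) →ₗ[ℝ] (Fin 10 → ℝ) :=
  phi.comp (derivations c0).subtype

def derivEquiv : (Fin 10 → ℝ) ≃ₗ[ℝ] ↥(derivations c0) :=
  LinearEquiv.ofLinear psi' phi'
    (by
      apply LinearMap.ext
      rintro ⟨D, hD⟩
      apply Subtype.ext
      show gen (phi D) = D
      exact complete D hD (phi D) rfl rfl rfl rfl rfl rfl rfl rfl rfl rfl)
    (by
      apply LinearMap.ext
      intro a
      show phi (gen a) = a
      exact phi_gen a)

/-- The bracket satisfies the Jacobi identity (and is skew-symmetric), its space of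
derivations has dimension 10, and every derivation is nilpotent, i.e. the Lie algebra
is characteristically nilpotent. -/
theorem stmt :
    Skew c0 ∧ Jacobi c0 ∧
    Module.finrank ℝ ↥(derivations c0) = 10 ∧
    ∀ D ∈ derivations c0, IsNilpotent D := by
  refine ⟨skew0, jac0, ?_, ?_⟩
  · rw [← derivEquiv.finrank_eq]
    simp [Module.finrank_pi]
  · intro D hD
    refine ⟨7, ?_⟩
    rw [← complete D hD (phi D) rfl rfl rfl rfl rfl rfl rfl rfl rfl rfl]
    exact gen_pow7 (phi D)
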